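/- arXiv:1512.00099 — 5 statements merged into one kernel-verified Lean document; each statement's English description precedes it below -/
import Mathlib

section
/- Let L ≥ 3, v : {1,…,L} → ℝ, and let H(k) be the associated Floquet matrix. Suppose J ⊆ ℝ is an open interval and E : J → ℝ, u : J → ℂ^L are differentiable functions such that for every k ∈ J one has ‖u(k)‖ = 1 (Euclidean norm) and H(k) u(k) = E(k) u(k). Then |E′(k)| ≤ 2 for every k ∈ J. -/
/-- The Floquet matrix `H(k)`: `L×L` complex matrix with `v` on the diagonal, `-1` on the
off-diagonals, and corner entries `-e^{∓ikL}` (indices `1,…,L` realized as `Fin L`). -/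
noncomputable def floquetH (L : ℕ) (v : Fin L → ℝ) (k : ℝ) : Matrix (Fin L) (Fin L) ℂ :=
  Matrix.of fun i j =>
    if i = j then (v i : ℂ)
    else if (i : ℕ) + 1 = (j : ℕ) then -1
    else if (j : ℕ) + 1 = (i : ℕ) then -1
    else if (i : ℕ) = 0 ∧ (j : ℕ) = L - 1 then -Complex.exp (-(Complex.I * k * L))
    else if (i : ℕ) = L - 1 ∧ (j : ℕ) = 0 then -Complex.exp (Complex.I * k * L)
    else 0

lemma floquetH_eq (L : ℕ) (hL : 3 ≤ L) (v : Fin L → ℝ) (k : ℝ) (i j : Fin L) :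
    floquetH L v k i j =
      (if i = j then (v i : ℂ) else 0)
      + (if (i:ℕ)+1 = (j:ℕ) then (-1:ℂ) else 0)
      + (if (j:ℕ)+1 = (i:ℕ) then (-1:ℂ) else 0)
      + (if (i:ℕ) = 0 ∧ (j:ℕ) = L-1 then -Complex.exp (-(Complex.I*k*L)) else 0)
      + (if (i:ℕ) = L-1 ∧ (j:ℕ) = 0 then -Complex.exp (Complex.I*k*L) else 0) := by
  have hi := i.isLt; have hj := j.isLt
  have hij : (i = j) ↔ ((i:ℕ) = (j:ℕ)) := Fin.ext_iff
  simp only [floquetH, Matrix.of_apply]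
  by_cases h1 : (i:ℕ) = (j:ℕ) <;> by_cases h2 : (i:ℕ)+1 = (j:ℕ) <;>
    by_cases h3 : (j:ℕ)+1 = (i:ℕ) <;> by_cases h4 : (i:ℕ)=0 ∧ (j:ℕ)=L-1 <;>
    by_cases h5 : (i:ℕ)=L-1 ∧ (j:ℕ)=0 <;>
    first
      | (exfalso; omega)
      | (simp [hij, h1, h2, h3, h4, h5, show ¬((0:ℕ) = L-1) by omega,
             show ¬(L-1 = 0) by omega, show ¬((1:ℕ) = L-1) by omega];
         try (split_ifs <;> first | (exfalso; omega) | simp))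

lemma floquetH_conj (L : ℕ) (hL : 3 ≤ L) (v : Fin L → ℝ) (k : ℝ) (i j : Fin L) :
    (starRingEnd ℂ) (floquetH L v k i j) = floquetH L v k j i := by
  have hi := i.isLt; have hj := j.isLt
  have hij : (i = j) ↔ ((i:ℕ) = (j:ℕ)) := Fin.ext_iff
  have hji : (j = i) ↔ ((j:ℕ) = (i:ℕ)) := Fin.ext_iff
  rw [floquetH_eq L hL v k i j, floquetH_eq L hL v k j i]
  simp only [hij, hji]
  split_ifs <;>
    first
      | (exfalso; omega)
      | (try (have hij' : i = j := Fin.ext (by omega); subst hij');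
         simp [map_add, map_neg, ← Complex.exp_conj, map_mul, Complex.conj_I,
           Complex.conj_ofReal, map_natCast, map_one, map_zero, neg_neg, neg_mul] <;>
         ring_nf)

lemma floquetH_hasDerivAt (L : ℕ) (hL : 3 ≤ L) (v : Fin L → ℝ) (k : ℝ) (i j : Fin L) :
    HasDerivAt (fun t : ℝ => floquetH L v t i j)
      ((if (i:ℕ) = 0 ∧ (j:ℕ) = L-1 then Complex.I*L*Complex.exp (-(Complex.I*k*L)) else 0)
       + (if (i:ℕ) = L-1 ∧ (j:ℕ) = 0 then -(Complex.I*L)*Complex.exp (Complex.I*k*L) else 0)) k := by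
  have base : HasDerivAt (fun t : ℝ => (t:ℂ)) 1 k := Complex.ofRealCLM.hasDerivAt
  have hlin : HasDerivAt (fun t : ℝ => Complex.I * t * (L:ℂ)) (Complex.I * L) k := by
    simpa using (base.const_mul Complex.I).mul_const (L:ℂ)
  have e1 : HasDerivAt (fun t : ℝ => -Complex.exp (-(Complex.I*t*L)))
      (Complex.I*L*Complex.exp (-(Complex.I*k*L))) k := by
    have := (hlin.fun_neg.cexp).fun_neg
    convert this using 1; rfl; ring
  have e2 : HasDerivAt (fun t : ℝ => -Complex.exp (Complex.I*t*L))
      (-(Complex.I*L)*Complex.exp (Complex.I*k*L)) k := by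
    have := (hlin.cexp).fun_neg
    convert this using 1; rfl; ring
  have hfun : (fun t : ℝ => floquetH L v t i j) = fun (t : ℝ) =>
      ((((if i = j then (v i : ℂ) else 0)
      + (if (i:ℕ)+1 = (j:ℕ) then (-1:ℂ) else 0))
      + (if (j:ℕ)+1 = (i:ℕ) then (-1:ℂ) else 0))
      + (if (i:ℕ) = 0 ∧ (j:ℕ) = L-1 then -Complex.exp (-(Complex.I*t*L)) else 0))
      + (if (i:ℕ) = L-1 ∧ (j:ℕ) = 0 then -Complex.exp (Complex.I*t*L) else 0) := by
    funext t; rw [floquetH_eq L hL v t i j]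
  rw [hfun]
  have h4 : HasDerivAt (fun t : ℝ => if (i:ℕ) = 0 ∧ (j:ℕ) = L-1 then -Complex.exp (-(Complex.I*t*L)) else 0)
      (if (i:ℕ) = 0 ∧ (j:ℕ) = L-1 then Complex.I*L*Complex.exp (-(Complex.I*k*L)) else 0) k := by
    by_cases h : (i:ℕ) = 0 ∧ (j:ℕ) = L-1 <;> simp only [h, if_true, if_false] <;>
      first | exact e1 | exact hasDerivAt_const k 0
  have h5 : HasDerivAt (fun t : ℝ => if (i:ℕ) = L-1 ∧ (j:ℕ) = 0 then -Complex.exp (Complex.I*t*L) else 0)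
      (if (i:ℕ) = L-1 ∧ (j:ℕ) = 0 then -(Complex.I*L)*Complex.exp (Complex.I*k*L) else 0) k := by
    by_cases h : (i:ℕ) = L-1 ∧ (j:ℕ) = 0 <;> simp only [h, if_true, if_false] <;>
      first | exact e2 | exact hasDerivAt_const k 0
  simpa using ((((hasDerivAt_const k _).fun_add (hasDerivAt_const k _)).fun_add
    (hasDerivAt_const k _)).fun_add h4).fun_add h5

lemma floquetH_row_eval (L : ℕ) (hL : 3 ≤ L) (v : Fin L → ℝ) (k : ℝ) (x : Fin L → ℂ)
    (i : Fin L) :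
    ∑ j, floquetH L v k i j * x j =
      (v i : ℂ) * x i
      + (if h : (i:ℕ)+1 < L then -x ⟨(i:ℕ)+1, h⟩ else 0)
      + (if h : 0 < (i:ℕ) then -x ⟨(i:ℕ)-1, by omega⟩ else 0)
      + (if (i:ℕ) = 0 then -Complex.exp (-(Complex.I*k*L)) * x ⟨L-1, by omega⟩ else 0)
      + (if (i:ℕ) = L-1 then -Complex.exp (Complex.I*k*L) * x ⟨0, by omega⟩ else 0) := by
  have hi := i.isLt
  have expand : ∀ j : Fin L, floquetH L v k i j * x j =
      (if i = j then (v i : ℂ) * x j else 0)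
      + (if (i:ℕ)+1 = (j:ℕ) then -x j else 0)
      + (if (j:ℕ)+1 = (i:ℕ) then -x j else 0)
      + (if (i:ℕ) = 0 ∧ (j:ℕ) = L-1 then -Complex.exp (-(Complex.I*k*L)) * x j else 0)
      + (if (i:ℕ) = L-1 ∧ (j:ℕ) = 0 then -Complex.exp (Complex.I*k*L) * x j else 0) := by
    intro j
    rw [floquetH_eq L hL v k i j]
    simp only [add_mul, ite_mul, zero_mul, neg_mul, one_mul, neg_neg]
  rw [Finset.sum_congr rfl (fun j _ => expand j)]
  simp only [Finset.sum_add_distrib]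
  congr 1
  congr 1
  congr 1
  congr 1
  · -- diagonal
    simp [Finset.sum_ite_eq]
  · -- superdiagonal
    by_cases h : (i:ℕ)+1 < L
    · rw [dif_pos h]
      have : ∀ j : Fin L, (if (i:ℕ)+1 = (j:ℕ) then -x j else 0)
          = (if (⟨(i:ℕ)+1, h⟩ : Fin L) = j then -x j else 0) := by
        intro j; congr 1; simp [Fin.ext_iff]
      rw [Finset.sum_congr rfl (fun j _ => this j)]
      simp [Finset.sum_ite_eq]
    · rw [dif_neg h]
      apply Finset.sum_eq_zero
      intro j _
      rw [if_neg]
      have := j.isLt; omega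
  · -- subdiagonal
    by_cases h : 0 < (i:ℕ)
    · rw [dif_pos h]
      have : ∀ j : Fin L, (if (j:ℕ)+1 = (i:ℕ) then -x j else 0)
          = (if (⟨(i:ℕ)-1, by omega⟩ : Fin L) = j then -x j else 0) := by
        intro j; congr 1; simp only [Fin.ext_iff, eq_iff_iff]
        constructor
        · intro hx; omega
        · intro hx; omega
      rw [Finset.sum_congr rfl (fun j _ => this j)]
      simp [Finset.sum_ite_eq]
    · rw [dif_neg h]
      apply Finset.sum_eq_zero
      intro j _
      rw [if_neg]; omega
  · -- corner (0, L-1)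
    by_cases h : (i:ℕ) = 0
    · rw [if_pos h]
      have : ∀ j : Fin L, (if (i:ℕ) = 0 ∧ (j:ℕ) = L-1 then -Complex.exp (-(Complex.I*k*L)) * x j else 0)
          = (if (⟨L-1, by omega⟩ : Fin L) = j then -Complex.exp (-(Complex.I*k*L)) * x j else 0) := by
        intro j; congr 1; simp only [Fin.ext_iff, eq_iff_iff]; constructor
        · rintro ⟨_, hx⟩; omega
        · intro hx; exact ⟨h, by omega⟩
      rw [Finset.sum_congr rfl (fun j _ => this j)]
      simp [Finset.sum_ite_eq]
    · rw [if_neg h]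
      apply Finset.sum_eq_zero
      intro j _
      rw [if_neg]; omega
  · -- corner (L-1, 0)
    by_cases h : (i:ℕ) = L-1
    · rw [if_pos h]
      have : ∀ j : Fin L, (if (i:ℕ) = L-1 ∧ (j:ℕ) = 0 then -Complex.exp (Complex.I*k*L) * x j else 0)
          = (if (⟨0, by omega⟩ : Fin L) = j then -Complex.exp (Complex.I*k*L) * x j else 0) := by
        intro j; congr 1; simp only [Fin.ext_iff, eq_iff_iff]; constructor
        · rintro ⟨_, hx⟩; omega
        · intro hx; exact ⟨h, by omega⟩
      rw [Finset.sum_congr rfl (fun j _ => this j)]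
      simp [Finset.sum_ite_eq]
    · rw [if_neg h]
      apply Finset.sum_eq_zero
      intro j _
      rw [if_neg]; omega

-- general helpers
private lemma him_aux (z p q : ℂ) (r s : ℝ) (h : (r:ℂ) * z - p - q = (s:ℂ) * z) :
    ((starRingEnd ℂ) z * p).im + ((starRingEnd ℂ) z * q).im = 0 := by
  have h2 : (starRingEnd ℂ) z * p + (starRingEnd ℂ) z * q
      = ((r:ℂ) - (s:ℂ)) * ((starRingEnd ℂ) z * z) := by
    linear_combination (-((starRingEnd ℂ) z)) * h
  have hzz : (starRingEnd ℂ) z * z = ((Complex.normSq z : ℝ) : ℂ) := by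
    rw [mul_comm, Complex.mul_conj]
  have h3 := congrArg Complex.im h2
  rw [hzz] at h3
  simpa [Complex.add_im, Complex.mul_im] using h3

private lemma imflip_aux (a b : ℂ) :
    ((starRingEnd ℂ) a * b).im = -(((starRingEnd ℂ) b * a).im) := by
  have h : (starRingEnd ℂ) a * b = (starRingEnd ℂ) ((starRingEnd ℂ) b * a) := by
    rw [map_mul, Complex.conj_conj, mul_comm]
  rw [h, Complex.conj_im]

private lemma imabs_aux (a b : ℂ) : |((starRingEnd ℂ) a * b).im| ≤ ‖a‖ * ‖b‖ := by
  calc |((starRingEnd ℂ) a * b).im| ≤ ‖(starRingEnd ℂ) a * b‖ :=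
        Complex.abs_im_le_norm _
    _ = ‖a‖ * ‖b‖ := by
        rw [norm_mul, RCLike.norm_conj]

private lemma amgm_aux (x y : ℝ) : x * y ≤ (x^2 + y^2)/2 := by
  nlinarith [sq_nonneg (x - y)]


set_option maxHeartbeats 1000000 in
/-- If `E(k)`, `u(k)` are differentiable on an open interval, `‖u(k)‖ = 1` (Euclidean norm) and
`H(k) u(k) = E(k) u(k)`, then `|E'(k)| ≤ 2` on that interval. -/
theorem abs_deriv_dispersion_curve_le_two (L : ℕ) (hL : 3 ≤ L) (v : Fin L → ℝ)
    (a b : ℝ) (E : ℝ → ℝ) (u : ℝ → EuclideanSpace ℂ (Fin L))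
    (E' : ℝ → ℝ) (u' : ℝ → EuclideanSpace ℂ (Fin L))
    (hE : ∀ k ∈ Set.Ioo a b, HasDerivAt E (E' k) k)
    (hu : ∀ k ∈ Set.Ioo a b, HasDerivAt u (u' k) k)
    (hnorm : ∀ k ∈ Set.Ioo a b, ‖u k‖ = 1)
    (heig : ∀ k ∈ Set.Ioo a b, (floquetH L v k).mulVec (u k) = (E k : ℂ) • (u k)) :
    ∀ k ∈ Set.Ioo a b, |E' k| ≤ 2 := by
  intro k hk
  classical
  have hL0 : 0 < L := by omega
  -- component-wise derivatives
  have hcomp : ∀ i : Fin L, HasDerivAt (fun t => u t i) (u' k i) k := by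
    intro i
    exact (((EuclideanSpace.proj i :
        EuclideanSpace ℂ (Fin L) →L[ℂ] ℂ)).restrictScalars ℝ).hasFDerivAt.comp_hasDerivAt
      k (hu k hk)
  -- rows of the eigen equation
  have hrow : ∀ t ∈ Set.Ioo a b, ∀ i : Fin L,
      ∑ j, floquetH L v t i j * u t j = (E t : ℂ) * u t i := by
    intro t ht i
    have h1 := congrFun (heig t ht) i
    simpa [Matrix.mulVec, dotProduct] using h1
  -- sum of squared moduli is 1
  have hsum1 : ∀ t ∈ Set.Ioo a b, ∑ i, (starRingEnd ℂ) (u t i) * u t i = 1 := by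
    intro t ht
    have h2 : ∑ i, (starRingEnd ℂ) (u t i) * u t i
        = ((∑ i, ‖u t i‖^2 : ℝ) : ℂ) := by
      push_cast
      refine Finset.sum_congr rfl fun i _ => ?_
      rw [mul_comm, Complex.mul_conj']
    rw [h2]
    norm_cast
    have h3 : ∑ i, ‖u t i‖^2 = ‖u t‖^2 := by
      rw [EuclideanSpace.norm_eq, Real.sq_sqrt]
      positivity
    rw [h3, hnorm t ht]; norm_num
  set i0 : Fin L := ⟨0, by omega⟩ with hi0def
  set iL : Fin L := ⟨L-1, by omega⟩ with hiLdef
  have hv0 : (i0:ℕ) = 0 := rfl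
  have hvL : (iL:ℕ) = L-1 := rfl
  set DH : Fin L → Fin L → ℂ := fun i j =>
    (if (i:ℕ) = 0 ∧ (j:ℕ) = L-1 then Complex.I*L*Complex.exp (-(Complex.I*k*L)) else 0)
    + (if (i:ℕ) = L-1 ∧ (j:ℕ) = 0 then -(Complex.I*L)*Complex.exp (Complex.I*k*L) else 0)
    with hDHdef
  -- derivative of the quadratic form
  have hphi : HasDerivAt
      (fun t => ∑ i, ∑ j, (starRingEnd ℂ) (u t i) * (floquetH L v t i j * u t j))
      (∑ i, ∑ j, ((starRingEnd ℂ) (u' k i) * (floquetH L v k i j * u k j)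
        + (starRingEnd ℂ) (u k i) * (DH i j * u k j + floquetH L v k i j * u' k j))) k := by
    apply HasDerivAt.fun_sum; intro i _
    apply HasDerivAt.fun_sum; intro j _
    exact ((hcomp i).star).mul ((floquetH_hasDerivAt L hL v k i j).mul (hcomp j))
  -- the quadratic form equals E on the interval
  have hphiE : ∀ t ∈ Set.Ioo a b,
      ∑ i, ∑ j, (starRingEnd ℂ) (u t i) * (floquetH L v t i j * u t j) = ((E t : ℝ) : ℂ) := by
    intro t ht
    calc ∑ i, ∑ j, (starRingEnd ℂ) (u t i) * (floquetH L v t i j * u t j)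
        = ∑ i, (starRingEnd ℂ) (u t i) * ((E t : ℂ) * u t i) := by
          refine Finset.sum_congr rfl fun i _ => ?_
          rw [← Finset.mul_sum, hrow t ht i]
      _ = ((E t : ℝ) : ℂ) * ∑ i, (starRingEnd ℂ) (u t i) * u t i := by
          rw [Finset.mul_sum]; exact Finset.sum_congr rfl fun i _ => by ring
      _ = ((E t : ℝ) : ℂ) := by rw [hsum1 t ht, mul_one]
  have hIoo : Set.Ioo a b ∈ nhds k := isOpen_Ioo.mem_nhds hk
  have hEC : HasDerivAt (fun t => ((E t : ℝ) : ℂ)) ((E' k : ℝ) : ℂ) k :=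
    Complex.ofRealCLM.hasFDerivAt.comp_hasDerivAt k (hE k hk)
  have hDeq : (∑ i, ∑ j, ((starRingEnd ℂ) (u' k i) * (floquetH L v k i j * u k j)
        + (starRingEnd ℂ) (u k i) * (DH i j * u k j + floquetH L v k i j * u' k j)))
      = ((E' k : ℝ) : ℂ) := by
    have h1 := hphi.congr_of_eventuallyEq
      (Filter.eventuallyEq_of_mem hIoo (fun t ht => (hphiE t ht).symm))
    exact h1.unique hEC
  -- derivative of the normalization
  have hpsi : HasDerivAt (fun t => ∑ i, (starRingEnd ℂ) (u t i) * u t i)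
      (∑ i, ((starRingEnd ℂ) (u' k i) * u k i + (starRingEnd ℂ) (u k i) * u' k i)) k := by
    apply HasDerivAt.fun_sum; intro i _
    exact ((hcomp i).star).mul (hcomp i)
  have hA : (∑ i, ((starRingEnd ℂ) (u' k i) * u k i + (starRingEnd ℂ) (u k i) * u' k i))
      = 0 := by
    have h1 := hpsi.congr_of_eventuallyEq
      (Filter.eventuallyEq_of_mem hIoo (fun t ht => (hsum1 t ht).symm))
    exact h1.unique (hasDerivAt_const k 1)
  -- split the derivative sum into three pieces
  have hS1 : ∑ i, ∑ j, (starRingEnd ℂ) (u' k i) * (floquetH L v k i j * u k j)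
      = ((E k : ℝ) : ℂ) * ∑ i, (starRingEnd ℂ) (u' k i) * u k i := by
    rw [Finset.mul_sum]
    refine Finset.sum_congr rfl fun i _ => ?_
    rw [← Finset.mul_sum, hrow k hk i]; ring
  have hcol : ∀ j : Fin L, ∑ i, (starRingEnd ℂ) (u k i) * floquetH L v k i j
      = ((E k : ℝ) : ℂ) * (starRingEnd ℂ) (u k j) := by
    intro j
    calc ∑ i, (starRingEnd ℂ) (u k i) * floquetH L v k i j
        = ∑ i, (starRingEnd ℂ) (floquetH L v k j i * u k i) := by
          refine Finset.sum_congr rfl fun i _ => ?_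
          rw [map_mul, floquetH_conj L hL v k j i]; ring
      _ = (starRingEnd ℂ) (∑ i, floquetH L v k j i * u k i) := by rw [map_sum]
      _ = (starRingEnd ℂ) ((E k : ℂ) * u k j) := by rw [hrow k hk j]
      _ = ((E k : ℝ) : ℂ) * (starRingEnd ℂ) (u k j) := by
          rw [map_mul, Complex.conj_ofReal]
  have hS3 : ∑ i, ∑ j, (starRingEnd ℂ) (u k i) * (floquetH L v k i j * u' k j)
      = ((E k : ℝ) : ℂ) * ∑ j, (starRingEnd ℂ) (u k j) * u' k j := by
    rw [Finset.sum_comm, Finset.mul_sum]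
    refine Finset.sum_congr rfl fun j _ => ?_
    calc ∑ i, (starRingEnd ℂ) (u k i) * (floquetH L v k i j * u' k j)
        = (∑ i, (starRingEnd ℂ) (u k i) * floquetH L v k i j) * u' k j := by
          rw [Finset.sum_mul]; exact Finset.sum_congr rfl fun i _ => by ring
      _ = ((E k : ℝ) : ℂ) * ((starRingEnd ℂ) (u k j) * u' k j) := by rw [hcol j]; ring
  -- corner sums
  have hcorner : ∀ (c : ℂ) (p q : Fin L),
      ∑ i : Fin L, ∑ j : Fin L,
        (starRingEnd ℂ) (u k i) * ((if i = p ∧ j = q then c else 0) * u k j)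
      = (starRingEnd ℂ) (u k p) * (c * u k q) := by
    intro c p q
    have h1 : ∀ i j : Fin L,
        (starRingEnd ℂ) (u k i) * ((if i = p ∧ j = q then c else 0) * u k j)
        = if i = p then (if j = q then (starRingEnd ℂ) (u k i) * (c * u k j) else 0)
          else 0 := by
      intro i j
      by_cases h4 : i = p <;> by_cases h5 : j = q <;> simp [h4, h5]
    rw [Finset.sum_congr rfl fun i _ => Finset.sum_congr rfl fun j _ => h1 i j]
    simp
  have hcond1 : ∀ i j : Fin L, ((i:ℕ) = 0 ∧ (j:ℕ) = L-1) ↔ (i = i0 ∧ j = iL) := by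
    intro i j; rw [hi0def, hiLdef]; simp [Fin.ext_iff]
  have hcond2 : ∀ i j : Fin L, ((i:ℕ) = L-1 ∧ (j:ℕ) = 0) ↔ (i = iL ∧ j = i0) := by
    intro i j; rw [hi0def, hiLdef]; simp [Fin.ext_iff]
  have hS2 : ∑ i, ∑ j, (starRingEnd ℂ) (u k i) * (DH i j * u k j)
      = (starRingEnd ℂ) (u k i0) * ((Complex.I*L*Complex.exp (-(Complex.I*k*L))) * u k iL)
        + (starRingEnd ℂ) (u k iL) * ((-(Complex.I*L)*Complex.exp (Complex.I*k*L)) * u k i0) := by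
    have hsplit : ∀ i j : Fin L, (starRingEnd ℂ) (u k i) * (DH i j * u k j)
        = (starRingEnd ℂ) (u k i) *
            ((if i = i0 ∧ j = iL then Complex.I*L*Complex.exp (-(Complex.I*k*L)) else 0) * u k j)
          + (starRingEnd ℂ) (u k i) *
            ((if i = iL ∧ j = i0 then -(Complex.I*L)*Complex.exp (Complex.I*k*L) else 0) * u k j) := by
      intro i j
      rw [hDHdef]
      simp only [← hcond1 i j, ← hcond2 i j]
      ring
    rw [Finset.sum_congr rfl fun i _ => Finset.sum_congr rfl fun j _ => hsplit i j]
    simp only [Finset.sum_add_distrib]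
    rw [hcorner _ i0 iL, hcorner _ iL i0]
  -- Feynman–Hellmann: E' k = -2 L Im w
  set w : ℂ := Complex.exp (-(Complex.I*k*L)) * ((starRingEnd ℂ) (u k i0) * u k iL) with hwdef
  have hconjw : (starRingEnd ℂ) w
      = Complex.exp (Complex.I*k*L) * ((starRingEnd ℂ) (u k iL) * u k i0) := by
    rw [hwdef]
    rw [map_mul, map_mul, ← Complex.exp_conj]
    simp [Complex.conj_ofReal, Complex.conj_I]
    ring
  have hEw : ((E' k : ℝ) : ℂ) = Complex.I * L * (w - (starRingEnd ℂ) w) := by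
    have hsum := hDeq
    have hsplitD : (∑ i, ∑ j, ((starRingEnd ℂ) (u' k i) * (floquetH L v k i j * u k j)
          + (starRingEnd ℂ) (u k i) * (DH i j * u k j + floquetH L v k i j * u' k j)))
        = (∑ i, ∑ j, (starRingEnd ℂ) (u' k i) * (floquetH L v k i j * u k j))
          + (∑ i, ∑ j, (starRingEnd ℂ) (u k i) * (DH i j * u k j))
          + (∑ i, ∑ j, (starRingEnd ℂ) (u k i) * (floquetH L v k i j * u' k j)) := by
      simp only [← Finset.sum_add_distrib]
      refine Finset.sum_congr rfl fun i _ => Finset.sum_congr rfl fun j _ => by ring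
    rw [hsplitD, hS1, hS2, hS3] at hsum
    have hzero : ((E k : ℝ) : ℂ) * (∑ i, (starRingEnd ℂ) (u' k i) * u k i)
        + ((E k : ℝ) : ℂ) * (∑ j, (starRingEnd ℂ) (u k j) * u' k j) = 0 := by
      rw [← mul_add, ← Finset.sum_add_distrib, hA, mul_zero]
    rw [← hsum]
    rw [hwdef, hconjw]
    linear_combination hzero
  have hEder : E' k = -2 * L * w.im := by
    have h1 : ((E' k : ℝ) : ℂ) = ((-2 * L * w.im : ℝ) : ℂ) := by
      rw [hEw, Complex.sub_conj]
      push_cast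
      linear_combination (2 * (L:ℂ) * (w.im:ℂ)) * Complex.I_mul_I
    exact_mod_cast h1
  -- the discrete current
  set c : ℕ → ℂ := fun n => if h : n < L then u k ⟨n, h⟩ else 0 with hcdef
  have hcval : ∀ (n : ℕ) (h : n < L), c n = u k ⟨n, h⟩ := fun n h => dif_pos h
  -- row 0 in sequence form
  have hrow0 : ((v i0 : ℝ) : ℂ) * c 0 - c 1 - Complex.exp (-(Complex.I*k*L)) * c (L-1)
      = ((E k : ℝ) : ℂ) * c 0 := by
    have h := hrow k hk i0
    rw [floquetH_row_eval L hL v k (u k) i0] at h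
    simp only [hi0def, Fin.val_mk] at h
    rw [dif_pos (show 0+1 < L by omega), dif_neg (show ¬(0 < 0) by omega),
        if_neg (show ¬((0:ℕ) = L-1) by omega)] at h
    simp only [if_true] at h
    norm_num at h
    rw [hcval 0 (by omega), hcval 1 (by omega), hcval (L-1) (by omega)]
    linear_combination h
  -- middle rows in sequence form
  have hmid : ∀ n : ℕ, 1 ≤ n → n ≤ L-2 →
      ((starRingEnd ℂ) (c n) * c (n+1)).im = ((starRingEnd ℂ) (c (n-1)) * c n).im := by
    intro n h1 h2
    have hnL : n < L := by omega
    have h := hrow k hk ⟨n, hnL⟩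
    rw [floquetH_row_eval L hL v k (u k) ⟨n, hnL⟩] at h
    simp only [Fin.val_mk] at h
    rw [dif_pos (show n+1 < L by omega), dif_pos (show 0 < n by omega),
        if_neg (show ¬(n = 0) by omega), if_neg (show ¬(n = L-1) by omega)] at h
    have h' : ((v ⟨n, hnL⟩ : ℝ):ℂ) * c n - c (n+1) - c (n-1) = ((E k:ℝ):ℂ) * c n := by
      rw [hcval n hnL, hcval (n+1) (by omega), hcval (n-1) (by omega)]
      linear_combination h
    have him := him_aux (c n) (c (n+1)) (c (n-1)) (v ⟨n, hnL⟩) (E k) h'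
    have hfl := imflip_aux (c n) (c (n-1))
    linarith
  -- base current
  have hbase : ((starRingEnd ℂ) (c 0) * c 1).im = -w.im := by
    have h' : ((v i0 : ℝ):ℂ) * c 0 - c 1 - (Complex.exp (-(Complex.I*k*L)) * c (L-1))
        = ((E k:ℝ):ℂ) * c 0 := by linear_combination hrow0
    have him := him_aux (c 0) (c 1) (Complex.exp (-(Complex.I*k*L)) * c (L-1)) (v i0) (E k) h'
    have h2 : (starRingEnd ℂ) (c 0) * (Complex.exp (-(Complex.I*k*L)) * c (L-1)) = w := by
      rw [hcval 0 (by omega), hcval (L-1) (by omega), hwdef]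
      exact mul_left_comm _ _ _
    rw [h2] at him
    linarith
  -- all currents equal
  have hJ : ∀ n : ℕ, n ≤ L-2 → ((starRingEnd ℂ) (c n) * c (n+1)).im = -w.im := by
    intro n
    induction n with
    | zero => intro _; exact hbase
    | succ m ih =>
        intro hm
        have h1 := hmid (m+1) (by omega) (by omega)
        simp only [Nat.add_sub_cancel] at h1
        rw [h1]
        exact ih (by omega)
  -- squared norms
  set aseq : ℕ → ℝ := fun n => ‖c n‖^2 with haseqdef
  have hsq : ∑ n ∈ Finset.range L, aseq n = 1 := by
    rw [← Fin.sum_univ_eq_sum_range (fun n => aseq n) L]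
    have hterm : ∀ i : Fin L, aseq (i:ℕ) = ‖u k i‖^2 := by
      intro i
      rw [haseqdef]
      simp only
      rw [hcval _ i.isLt]
    rw [Finset.sum_congr rfl fun i _ => hterm i]
    have h3 : ∑ i, ‖u k i‖^2 = ‖u k‖^2 := by
      rw [EuclideanSpace.norm_eq, Real.sq_sqrt]
      positivity
    rw [h3, hnorm k hk]; norm_num
  have hbound : ∀ n : ℕ, n ≤ L-2 → |w.im| ≤ (aseq n + aseq (n+1))/2 := by
    intro n hn
    calc |w.im| = |((starRingEnd ℂ) (c n) * c (n+1)).im| := by rw [hJ n hn, abs_neg]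
      _ ≤ ‖c n‖ * ‖c (n+1)‖ := imabs_aux _ _
      _ ≤ (aseq n + aseq (n+1))/2 := by
          have := amgm_aux ‖c n‖ ‖c (n+1)‖
          simpa [haseqdef] using this
  have hwb : |w.im| ≤ (aseq 0 + aseq (L-1))/2 := by
    have he : ‖Complex.exp (-(Complex.I*k*L))‖ = 1 := by
      rw [Complex.norm_exp]; simp
    have h1 : ‖w‖ = ‖c 0‖ * ‖c (L-1)‖ := by
      rw [hwdef, norm_mul, norm_mul, he, one_mul]
      rw [hcval 0 (by omega), hcval (L-1) (by omega)]
      rw [hi0def, hiLdef, RCLike.norm_conj]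
    calc |w.im| ≤ ‖w‖ := Complex.abs_im_le_norm w
      _ = ‖c 0‖ * ‖c (L-1)‖ := h1
      _ ≤ (aseq 0 + aseq (L-1))/2 := by
          have := amgm_aux ‖c 0‖ ‖c (L-1)‖
          simpa [haseqdef] using this
  -- summation
  have hLb : (L:ℝ) * |w.im| ≤ 1 := by
    have hsumJ : (∑ _n ∈ Finset.range (L-1), |w.im|) + |w.im| = (L:ℝ) * |w.im| := by
      rw [Finset.sum_const, Finset.card_range, nsmul_eq_mul,
        Nat.cast_sub (show 1 ≤ L by omega)]
      push_cast
      ring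
    have hstep : (∑ _n ∈ Finset.range (L-1), |w.im|) + |w.im|
        ≤ (∑ n ∈ Finset.range (L-1), (aseq n + aseq (n+1))/2) + (aseq 0 + aseq (L-1))/2 := by
      refine add_le_add (Finset.sum_le_sum ?_) hwb
      intro n hn
      exact hbound n (by simp only [Finset.mem_range] at hn; omega)
    have hid : (∑ n ∈ Finset.range (L-1), (aseq n + aseq (n+1))/2) + (aseq 0 + aseq (L-1))/2
        = ∑ n ∈ Finset.range L, aseq n := by
      have h1 : ∑ n ∈ Finset.range (L-1), (aseq n + aseq (n+1))/2
          = ((∑ n ∈ Finset.range (L-1), aseq n) + (∑ n ∈ Finset.range (L-1), aseq (n+1)))/2 := by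
        rw [← Finset.sum_add_distrib, ← Finset.sum_div]
      have h2 : ∑ n ∈ Finset.range L, aseq n
          = (∑ n ∈ Finset.range (L-1), aseq (n+1)) + aseq 0 := by
        have h := Finset.sum_range_succ' aseq (L-1)
        rw [show L-1+1 = L by omega] at h
        exact h
      have h3 : ∑ n ∈ Finset.range L, aseq n
          = (∑ n ∈ Finset.range (L-1), aseq n) + aseq (L-1) := by
        have h := Finset.sum_range_succ aseq (L-1)
        rw [show L-1+1 = L by omega] at h
        exact h
      rw [h1]
      linarith
    calc (L:ℝ) * |w.im| = (∑ _n ∈ Finset.range (L-1), |w.im|) + |w.im| := hsumJ.symm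
      _ ≤ _ := hstep
      _ = ∑ n ∈ Finset.range L, aseq n := hid
      _ = 1 := hsq
  -- conclusion
  have habs : |E' k| = 2 * ((L:ℝ) * |w.im|) := by
    rw [hEder, abs_mul, abs_mul]
    rw [show |(-2:ℝ)| = 2 by norm_num, abs_of_nonneg (show (0:ℝ) ≤ (L:ℝ) by positivity)]
    ring
  rw [habs]
  linarith
end

section
/- Let T be a real 2×2 matrix, θ ∈ ℝ, and m ∈ ℂ with Im m ≠ 0. If, viewing T as acting on ℂ², one has T (1, m)ᵀ = e^{−iθ} (1, m)ᵀ, then T = (1/Im m) · [[ Im(e^{iθ} m), −sin θ ], [ |m|² sin θ, Im(e^{−iθ} m) ]]. -/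
/-- If a real `2×2` matrix `T`, viewed as acting on `ℂ²`, satisfies
`T (1, m)ᵀ = e^{-iθ} (1, m)ᵀ` with `Im m ≠ 0`, then
`T = (1/Im m) · [[Im(e^{iθ} m), -sin θ], [|m|² sin θ, Im(e^{-iθ} m)]]`. -/
theorem transfer_matrix_eq_of_eigenvector (T : Matrix (Fin 2) (Fin 2) ℝ) (θ : ℝ) (m : ℂ)
    (hm : m.im ≠ 0)
    (h : (T.map Complex.ofReal).mulVec ![1, m] = Complex.exp (-(θ * Complex.I)) • ![1, m]) :
    T = (1 / m.im) •
      !![(Complex.exp (θ * Complex.I) * m).im, -Real.sin θ;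
         ‖m‖ ^ 2 * Real.sin θ, (Complex.exp (-(θ * Complex.I)) * m).im] := by
  have hexp : Complex.exp (-(θ * Complex.I)) = Complex.cos θ - Complex.sin θ * Complex.I := by
    rw [show -(↑θ * Complex.I) = (↑(-θ) : ℂ) * Complex.I by push_cast; ring,
      Complex.exp_mul_I]
    push_cast
    simp [Real.cos_neg, Real.sin_neg]
    ring
  have hexp' : Complex.exp (↑θ * Complex.I) = Complex.cos θ + Complex.sin θ * Complex.I :=
    Complex.exp_mul_I θ
  have h0 := congrFun h 0
  have h1 := congrFun h 1
  simp [Matrix.mulVec, dotProduct, Fin.sum_univ_two, hexp, Complex.ext_iff,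
    Complex.cos_ofReal_re, Complex.cos_ofReal_im, Complex.sin_ofReal_re, Complex.sin_ofReal_im,
    Complex.mul_re, Complex.mul_im] at h0 h1
  obtain ⟨e00, e01⟩ := h0
  obtain ⟨e10, e11⟩ := h1
  rw [Complex.sq_norm, Complex.normSq_apply]
  ext i j
  fin_cases i <;> fin_cases j <;>
    simp [hexp, hexp', Complex.mul_im, Complex.cos_ofReal_re, Complex.cos_ofReal_im,
      Complex.sin_ofReal_re, Complex.sin_ofReal_im] <;>
    field_simp <;>
    first
      | linear_combination m.im * e00 - m.re * e01
      | linear_combination m.im * e10 - m.re * e11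
      | linear_combination e01
      | linear_combination e11
end

section
/- Let T be a real 2×2 matrix, θ ∈ ℝ, and m ∈ ℂ with Im m > 0. If, viewing T as acting on ℂ², one has T (1, m)ᵀ = e^{−iθ} (1, m)ᵀ, then ‖T‖ ≥ (|sin θ| / 2) · (1 + |m|²) / Im m, where ‖·‖ is the operator norm induced by the Euclidean norm on ℝ². -/
open scoped Matrix.Norms.L2Operator

/-- If a real `2×2` matrix `T`, viewed as acting on `ℂ²`, satisfies
`T (1, m)ᵀ = e^{-iθ} (1, m)ᵀ` with `Im m > 0`, then
`‖T‖ ≥ (|sin θ|/2) (1 + |m|²) / Im m`, with the Euclidean operator norm. -/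
theorem transfer_matrix_norm_lower_bound (T : Matrix (Fin 2) (Fin 2) ℝ) (θ : ℝ) (m : ℂ)
    (hm : 0 < m.im)
    (h : (T.map Complex.ofReal).mulVec ![1, m] = Complex.exp (-(θ * Complex.I)) • ![1, m]) :
    ‖T‖ ≥ |Real.sin θ| / 2 * (1 + ‖m‖ ^ 2) / m.im := by
  set a := m.re with ha
  set b := m.im with hb
  set c := Real.cos θ
  set s := Real.sin θ
  have hexp : Complex.exp (-(θ * Complex.I)) =
      Complex.ofReal (Real.cos θ) - Complex.ofReal (Real.sin θ) * Complex.I := by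
    rw [show -((θ:ℂ) * Complex.I) = ((-θ : ℝ) : ℂ) * Complex.I by push_cast; ring,
      Complex.exp_mul_I, ← Complex.ofReal_cos, ← Complex.ofReal_sin,
      Real.cos_neg, Real.sin_neg]
    push_cast
    ring
  have h0 := congrFun h 0
  have h1 := congrFun h 1
  simp only [Matrix.mulVec, dotProduct, Fin.sum_univ_two, Matrix.map_apply,
    Matrix.cons_val_zero, Matrix.cons_val_one, Matrix.head_cons, Pi.smul_apply,
    smul_eq_mul, hexp, mul_one] at h0 h1
  rw [Complex.ext_iff] at h0 h1
  obtain ⟨h0r, h0i⟩ := h0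
  obtain ⟨h1r, h1i⟩ := h1
  simp [Complex.add_re, Complex.add_im, Complex.mul_re, Complex.mul_im, Complex.sub_re,
    Complex.sub_im, Complex.ofReal_re, Complex.ofReal_im, Complex.I_re, Complex.I_im,
    Complex.cos_ofReal_re, Complex.sin_ofReal_re,
    ← ha, ← hb] at h0r h0i h1r h1i
  have key : ∀ j : Fin 2, T 0 j ^ 2 + T 1 j ^ 2 ≤ ‖T‖ ^ 2 := by
    intro j
    have hv := T.l2_opNorm_mulVec (EuclideanSpace.single j (1 : ℝ))
    rw [EuclideanSpace.norm_single, norm_one, mul_one] at hv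
    have hle : ‖(EuclideanSpace.equiv (Fin 2) ℝ).symm (T.mulVec (EuclideanSpace.single j 1))‖ ^ 2 ≤ ‖T‖ ^ 2 := by
      have h0 : (0:ℝ) ≤ ‖T‖ := norm_nonneg _
      nlinarith [norm_nonneg ((EuclideanSpace.equiv (Fin 2) ℝ).symm (T.mulVec (EuclideanSpace.single j 1))), hv]
    rw [EuclideanSpace.norm_eq] at hle
    rw [Real.sq_sqrt (by positivity)] at hle
    simp only [Fin.sum_univ_two] at hle
    have hmv : ∀ i : Fin 2, T.mulVec (EuclideanSpace.single j (1:ℝ)) i = T i j := by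
      intro i
      show (T.mulVec (Pi.single j (1:ℝ))) i = T i j
      rw [Matrix.mulVec_single]
      simp
    calc T 0 j ^ 2 + T 1 j ^ 2
        = ‖T.mulVec (EuclideanSpace.single j (1:ℝ)) 0‖ ^ 2 + ‖T.mulVec (EuclideanSpace.single j (1:ℝ)) 1‖ ^ 2 := by
          rw [hmv 0, hmv 1]; simp [sq_abs, Real.norm_eq_abs]
      _ ≤ ‖T‖ ^ 2 := hle
  have e00 : b * T 0 0 = c * b + s * a := by linear_combination b * h0r - a * h0i
  have e01 : b * T 0 1 = -s := by linear_combination h0i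
  have e10 : b * T 1 0 = s * (a ^ 2 + b ^ 2) := by linear_combination b * h1r - a * h1i
  have e11 : b * T 1 1 = c * b - s * a := by linear_combination h1i
  have f00 : (b * T 0 0) ^ 2 = (c * b + s * a) ^ 2 := by rw [e00]
  have f01 : (b * T 0 1) ^ 2 = s ^ 2 := by rw [e01]; ring
  have f10 : (b * T 1 0) ^ 2 = s ^ 2 * (a ^ 2 + b ^ 2) ^ 2 := by rw [e10]; ring
  have f11 : (b * T 1 1) ^ 2 = (c * b - s * a) ^ 2 := by rw [e11]
  have hN : (0 : ℝ) ≤ ‖T‖ := norm_nonneg _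
  have k := mul_le_mul_of_nonneg_left (add_le_add (key 0) (key 1)) (sq_nonneg b)
  rw [ge_iff_le, Complex.sq_norm, Complex.normSq_apply, ← ha, ← hb]
  have h2 : (|s| / 2 * (1 + (a * a + b * b)) / b) ^ 2 ≤ ‖T‖ ^ 2 := by
    have hb2 : (0 : ℝ) < b ^ 2 := by positivity
    have ht : (|s| / 2 * (1 + (a * a + b * b)) / b) ^ 2
        = s ^ 2 * (1 + a ^ 2 + b ^ 2) ^ 2 / (4 * b ^ 2) := by
      rw [div_pow, mul_pow, div_pow, sq_abs]; ring
    rw [ht, div_le_iff₀ (by positivity)]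
    have ksum : (c * b + s * a) ^ 2 + s ^ 2 * (a ^ 2 + b ^ 2) ^ 2 + s ^ 2 + (c * b - s * a) ^ 2
        ≤ 2 * b ^ 2 * ‖T‖ ^ 2 := by
      calc (c * b + s * a) ^ 2 + s ^ 2 * (a ^ 2 + b ^ 2) ^ 2 + s ^ 2 + (c * b - s * a) ^ 2
          = (b * T 0 0) ^ 2 + (b * T 1 0) ^ 2 + (b * T 0 1) ^ 2 + (b * T 1 1) ^ 2 := by
            rw [f00, f01, f10, f11]
        _ = b ^ 2 * ((T 0 0) ^ 2 + (T 1 0) ^ 2 + ((T 0 1) ^ 2 + (T 1 1) ^ 2)) := by ring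
        _ ≤ b ^ 2 * (‖T‖ ^ 2 + ‖T‖ ^ 2) := k
        _ = 2 * b ^ 2 * ‖T‖ ^ 2 := by ring
    nlinarith [ksum, sq_nonneg (s * (a ^ 2 + b ^ 2 - 1)), sq_nonneg (s * a), sq_nonneg (c * b)]
  exact le_of_pow_le_pow_left₀ (by norm_num) hN h2
end

section
/- Let L ≥ 3, v : {1,…,L} → ℝ, and let H(k) be the associated Floquet matrix. Then for every k ∈ ℝ and every z ∈ ℂ, det( H(k) − z·Id ) = tr T(L,z) − 2 cos(kL), where T(L,z) = A(v(L),z)⋯A(v(1),z) with A(a,z) = [[a−z, −1],[1, 0]] is the (complexified) transfer matrix. -/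
/-- The complexified one-step transfer matrix `A(a,z) = [[a-z,-1],[1,0]]`. -/
noncomputable def transferAC (a : ℝ) (z : ℂ) : Matrix (Fin 2) (Fin 2) ℂ :=
  !![(a : ℂ) - z, -1; 1, 0]

/-- The complexified transfer matrix `T(L,z) = A(v(L),z) ⋯ A(v(1),z)`. -/
noncomputable def transferTC (L : ℕ) (v : Fin L → ℝ) (z : ℂ) : Matrix (Fin 2) (Fin 2) ℂ :=
  ((List.ofFn fun i : Fin L => transferAC (v i) z).reverse).prod


namespace FloqAux


/-- tridiagonal determinant recursion (front-stripping). -/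
def Dd : (n : ℕ) → (Fin n → ℂ) → ℂ
  | 0, _ => 1
  | 1, w => w 0
  | (n+2), w => w 0 * Dd (n+1) (fun i => w i.succ) - Dd n (fun i => w i.succ.succ)

def Ed : (n : ℕ) → (Fin n → ℂ) → ℂ
  | 0, _ => 0
  | 1, _ => 1
  | (n+2), w => w 0 * Ed (n+1) (fun i => w i.succ) - Ed n (fun i => w i.succ.succ)

def Yv : (n : ℕ) → (Fin n → ℂ) → ℂ
  | 0, _ => 0
  | (n+1), w => -Dd n (fun i => w i.succ)

def Tv : (n : ℕ) → (Fin n → ℂ) → ℂ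
  | 0, _ => 1
  | (n+1), w => -Ed n (fun i => w i.succ)

noncomputable def Amat (a : ℂ) : Matrix (Fin 2) (Fin 2) ℂ := !![a, -1; 1, 0]

noncomputable def Pm (n : ℕ) (w : Fin n → ℂ) : Matrix (Fin 2) (Fin 2) ℂ :=
  ((List.ofFn fun i => Amat (w i)).reverse).prod

lemma Pm_succ (n : ℕ) (w : Fin (n+1) → ℂ) :
    Pm (n+1) w = Pm n (fun i => w i.succ) * Amat (w 0) := by
  simp [Pm, List.ofFn_succ]

lemma Pm_spec : ∀ (n : ℕ) (w : Fin n → ℂ),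
    Pm n w = !![Dd n w, Yv n w; Ed n w, Tv n w] := by
  intro n
  induction n with
  | zero =>
      intro w
      simp [Pm, Dd, Yv, Ed, Tv, Matrix.one_fin_two]
  | succ n ih =>
      intro w
      rw [Pm_succ, ih]
      have h00 : (Dd n fun i => w i.succ) * w 0 + Yv n (fun i => w i.succ) * 1
          = Dd (n+1) w := by
        cases n with
        | zero => simp [Dd, Yv]
        | succ m => simp only [Dd, Yv]; ring
      have h01 : (Dd n fun i => w i.succ) * (-1) + Yv n (fun i => w i.succ) * 0
          = Yv (n+1) w := by
        simp only [Yv]; ring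
      have h10 : (Ed n fun i => w i.succ) * w 0 + Tv n (fun i => w i.succ) * 1
          = Ed (n+1) w := by
        cases n with
        | zero => simp [Ed, Tv]
        | succ m => simp only [Ed, Tv]; ring
      have h11 : (Ed n fun i => w i.succ) * (-1) + Tv n (fun i => w i.succ) * 0
          = Tv (n+1) w := by
        simp only [Tv]; ring
      rw [Amat, Matrix.mul_fin_two, h00, h01, h10, h11]

lemma Ed_eq : ∀ (n : ℕ) (w : Fin (n+1) → ℂ), Ed (n+1) w = Dd n (fun i => w i.castSucc) := by
  intro n
  induction n using Nat.strong_induction_on with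
  | _ n ih =>
    match n with
    | 0 => intro w; simp [Ed, Dd]
    | 1 => intro w; simp [Ed, Dd]
    | (m+2) =>
      intro w
      have h1 := ih (m+1) (by omega) (fun i => w i.succ)
      have h0 := ih m (by omega) (fun i => w i.succ.succ)
      show w 0 * Ed (m+2) (fun i => w i.succ) - Ed (m+1) (fun i => w i.succ.succ) = _
      rw [h1, h0]
      have e1 : (fun i : Fin (m+1) => w i.succ.castSucc) = (fun i => w i.castSucc.succ) :=
        funext fun i => congrArg w (by ext; simp)
      have e0 : (fun i : Fin m => w i.succ.succ.castSucc) = (fun i => w i.castSucc.succ.succ) :=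
        funext fun i => congrArg w (by ext; simp)
      rw [show Dd (m+2) (fun i : Fin (m+2) => w i.castSucc)
          = w (0 : Fin (m+2)).castSucc * Dd (m+1) (fun i => w i.succ.castSucc)
            - Dd m (fun i => w i.succ.succ.castSucc) from rfl, e1, e0]
      rfl

def Trid (n : ℕ) (w : Fin n → ℂ) : Matrix (Fin n) (Fin n) ℂ :=
  Matrix.of fun i j =>
    if i = j then w i
    else if (i : ℕ) + 1 = (j : ℕ) then -1
    else if (j : ℕ) + 1 = (i : ℕ) then -1
    else 0

lemma Trid_det : ∀ (n : ℕ) (w : Fin n → ℂ), (Trid n w).det = Dd n w := by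
  intro n
  induction n using Nat.strong_induction_on with
  | _ n ih =>
    match n with
    | 0 => intro w; simp [Dd]
    | 1 => intro w; simp [Trid, Dd, Matrix.det_fin_one]
    | (m+2) =>
      intro w
      rw [Matrix.det_succ_row_zero, Fin.sum_univ_succ, Fin.sum_univ_succ]
      have hz : ∀ j : Fin m, Trid (m+2) w 0 j.succ.succ = 0 := by
        intro j
        simp [Trid, Fin.ext_iff]
      have hsub0 : (Trid (m+2) w).submatrix Fin.succ ((0 : Fin (m+2)).succAbove)
          = Trid (m+1) (fun i => w i.succ) := by
        ext i j
        simp only [Matrix.submatrix_apply, Fin.zero_succAbove, Trid, Matrix.of_apply,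
          Fin.ext_iff, Fin.val_succ]
        split_ifs <;> first | rfl | omega
      have hsub1 : ((Trid (m+2) w).submatrix Fin.succ ((1 : Fin (m+2)).succAbove)).det
          = -Dd m (fun i => w i.succ.succ) := by
        rw [Matrix.det_succ_column_zero, Fin.sum_univ_succ]
        have hz1 : ∀ i : Fin m,
            ((Trid (m+2) w).submatrix Fin.succ ((1 : Fin (m+2)).succAbove)) i.succ 0 = 0 := by
          intro i
          simp [Trid, Fin.succAbove, Fin.ext_iff, Fin.lt_def]
        have hsub10 : (((Trid (m+2) w).submatrix Fin.succ
              ((1 : Fin (m+2)).succAbove)).submatrix ((0 : Fin (m+1)).succAbove) Fin.succ)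
            = Trid m (fun i => w i.succ.succ) := by
          ext i j
          simp only [Matrix.submatrix_apply, Fin.zero_succAbove, Fin.succAbove, Trid,
            Matrix.of_apply, Fin.ext_iff, Fin.val_succ, Fin.lt_def, Fin.castSucc]
          norm_num
          all_goals split_ifs <;> first | rfl | omega
        simp only [hz1, hsub10]
        have h00 : ((Trid (m+2) w).submatrix Fin.succ ((1 : Fin (m+2)).succAbove)) 0 0 = -1 := by
          simp [Trid, Fin.succAbove, Fin.ext_iff, Fin.lt_def]
        rw [h00, ih m (by omega)]
        simp
      simp only [hz, hsub0, hsub1, Fin.succ_zero_eq_one, mul_zero, zero_mul,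
        Finset.sum_const_zero, add_zero]
      have h0 : Trid (m+2) w 0 0 = w 0 := by simp [Trid]
      have h1 : Trid (m+2) w 0 1 = -1 := by simp [Trid, Fin.ext_iff]
      rw [h0, h1, ih (m+1) (by omega)]
      show _ = Dd (m+2) w
      rw [show Dd (m+2) w = w 0 * Dd (m+1) (fun i => w i.succ)
          - Dd m (fun i => w i.succ.succ) from rfl]
      simp only [Fin.val_zero, Fin.val_one, pow_zero, pow_one]
      ring

def per (n : ℕ) (w : Fin (n+3) → ℂ) (α β : ℂ) : Matrix (Fin (n+3)) (Fin (n+3)) ℂ :=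
  Matrix.of fun i j =>
    if i = j then w i
    else if (i : ℕ) + 1 = (j : ℕ) then -1
    else if (j : ℕ) + 1 = (i : ℕ) then -1
    else if (i : ℕ) = 0 ∧ (j : ℕ) = n + 2 then α
    else if (i : ℕ) = n + 2 ∧ (j : ℕ) = 0 then β
    else 0

lemma neg_one_sq_pow (n : ℕ) : ((-1 : ℂ))^n * (-1)^n = 1 := by
  rw [← pow_add, show n + n = 2*n by ring, pow_mul]; norm_num

lemma sA1_zero (n : ℕ) : (1 : Fin (n+3)).succAbove 0 = 0 := by
  simp [Fin.succAbove, Fin.lt_def]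
lemma sA1_succ (n : ℕ) (j : Fin (n+1)) :
    (1 : Fin (n+3)).succAbove j.succ = j.succ.succ := by
  simp [Fin.succAbove, Fin.lt_def]
lemma sAlast (n : ℕ) (j : Fin (n+2)) :
    (Fin.last (n+2) : Fin (n+3)).succAbove j = j.castSucc := by
  simp [Fin.succAbove, Fin.lt_def]
lemma sAlast' (n : ℕ) (j : Fin (n+1)) :
    (Fin.last (n+1) : Fin (n+2)).succAbove j = j.castSucc := by
  simp [Fin.succAbove, Fin.lt_def]
  intro h; have := j.is_lt; omega

-- determinant of the first column-minor S1
lemma S1_det (n : ℕ) (w : Fin (n+3) → ℂ) (α β : ℂ) :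
    ((per n w α β).submatrix Fin.succ ((1 : Fin (n+3)).succAbove)).det
      = -Dd (n+1) (fun i => w i.succ.succ) + β := by
  set S1 := (per n w α β).submatrix Fin.succ ((1 : Fin (n+3)).succAbove) with hS1
  rw [Matrix.det_succ_column_zero, Fin.sum_univ_succ]
  have hcol : ∀ i : Fin (n+2), S1 i 0
      = if (i : ℕ) = 0 then -1 else if (i : ℕ) = n+1 then β else 0 := by
    intro i
    have hi := i.is_lt
    rw [hS1, Matrix.submatrix_apply, sA1_zero]
    simp only [per, Matrix.of_apply, Fin.ext_iff, Fin.val_succ, Fin.val_zero]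
    split_ifs <;> first | rfl | omega | simp_all
  have hsum : ∑ i : Fin (n+1), (-1 : ℂ)^((i.succ : Fin (n+2)) : ℕ) * S1 i.succ 0 *
        (S1.submatrix i.succ.succAbove Fin.succ).det
      = (-1)^((n:ℕ)+1) * β *
        (S1.submatrix (Fin.last (n+1)).succAbove Fin.succ).det := by
    rw [Fintype.sum_eq_single (Fin.last n)]
    · rw [Fin.succ_last, hcol (Fin.last (n+1)), Fin.val_last]
      rw [if_neg (by omega), if_pos rfl]
    · intro b hb
      rw [hcol]
      have hb' : (b : ℕ) ≠ n := by simpa [Fin.ext_iff] using hb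
      simp only [Fin.val_succ]
      rw [if_neg (by omega), if_neg (by omega), mul_zero, zero_mul]
  rw [hsum]
  -- first inner minor: tridiagonal on w∘succ∘succ
  have hinner0 : S1.submatrix ((0 : Fin (n+2)).succAbove) Fin.succ
      = Trid (n+1) (fun i => w i.succ.succ) := by
    ext i j
    have hi := i.is_lt; have hj := j.is_lt
    rw [hS1, Matrix.submatrix_apply, Matrix.submatrix_apply, Fin.zero_succAbove, sA1_succ]
    simp only [per, Trid, Matrix.of_apply, Fin.ext_iff, Fin.val_succ]
    split_ifs <;> first | rfl | omega | simp_all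
  -- second inner minor: lower triangular with -1 diagonal
  have hinner1 : (S1.submatrix ((Fin.last (n+1)).succAbove) Fin.succ).det
      = (-1 : ℂ)^((n:ℕ)+1) := by
    have ht : (S1.submatrix ((Fin.last (n+1)).succAbove) Fin.succ).BlockTriangular
        OrderDual.toDual := by
      intro i j hij
      rw [Matrix.submatrix_apply, sAlast', hS1, Matrix.submatrix_apply, sA1_succ]
      have hij' : (i : ℕ) < (j : ℕ) := hij
      have hi := i.is_lt; have hj := j.is_lt
      simp only [per, Matrix.of_apply, Fin.ext_iff, Fin.val_succ, Fin.coe_castSucc]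
      split_ifs <;> first | rfl | omega | simp_all
    rw [Matrix.det_of_lowerTriangular _ ht]
    have hd : ∀ i : Fin (n+1), (S1.submatrix ((Fin.last (n+1)).succAbove) Fin.succ) i i
        = -1 := by
      intro i
      have hi := i.is_lt
      rw [Matrix.submatrix_apply, sAlast', hS1, Matrix.submatrix_apply, sA1_succ]
      simp only [per, Matrix.of_apply, Fin.ext_iff, Fin.val_succ, Fin.coe_castSucc]
      split_ifs <;> first | rfl | omega | simp_all
    simp only [hd]
    simp
  rw [hinner0, hinner1, Trid_det, hcol 0]
  simp only [Fin.val_zero, if_pos rfl, pow_zero]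
  have h2 := neg_one_sq_pow ((n:ℕ)+1)
  calc 1 * -1 * Dd (n+1) (fun i => w i.succ.succ)
        + (-1:ℂ)^((n:ℕ)+1) * β * (-1)^((n:ℕ)+1)
      = -Dd (n+1) (fun i => w i.succ.succ) + ((-1:ℂ)^((n:ℕ)+1) * (-1)^((n:ℕ)+1)) * β := by ring
    _ = -Dd (n+1) (fun i => w i.succ.succ) + β := by rw [h2, one_mul]

-- determinant of the last column-minor S2
lemma S2_det (n : ℕ) (w : Fin (n+3) → ℂ) (α β : ℂ) :
    ((per n w α β).submatrix Fin.succ ((Fin.last (n+2) : Fin (n+3)).succAbove)).det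
      = -(-1 : ℂ)^((n:ℕ)+1)
        + (-1 : ℂ)^((n:ℕ)+1) * β * Dd (n+1) (fun i => w i.castSucc.succ) := by
  set S2 := (per n w α β).submatrix Fin.succ ((Fin.last (n+2) : Fin (n+3)).succAbove) with hS2
  rw [Matrix.det_succ_column_zero, Fin.sum_univ_succ]
  have hcol : ∀ i : Fin (n+2), S2 i 0
      = if (i : ℕ) = 0 then -1 else if (i : ℕ) = n+1 then β else 0 := by
    intro i
    have hi := i.is_lt
    rw [hS2, Matrix.submatrix_apply, sAlast]
    simp only [per, Matrix.of_apply, Fin.ext_iff, Fin.val_succ, Fin.val_zero,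
      Fin.coe_castSucc]
    split_ifs <;> first | rfl | omega | simp_all
  have hsum : ∑ i : Fin (n+1), (-1 : ℂ)^((i.succ : Fin (n+2)) : ℕ) * S2 i.succ 0 *
        (S2.submatrix i.succ.succAbove Fin.succ).det
      = (-1)^((n:ℕ)+1) * β *
        (S2.submatrix (Fin.last (n+1)).succAbove Fin.succ).det := by
    rw [Fintype.sum_eq_single (Fin.last n)]
    · rw [Fin.succ_last, hcol (Fin.last (n+1)), Fin.val_last]
      rw [if_neg (by omega), if_pos rfl]
    · intro b hb
      rw [hcol]
      have hb' : (b : ℕ) ≠ n := by simpa [Fin.ext_iff] using hb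
      simp only [Fin.val_succ]
      rw [if_neg (by omega), if_neg (by omega), mul_zero, zero_mul]
  rw [hsum]
  -- first inner minor: upper triangular with -1 diagonal
  have hinner0 : (S2.submatrix ((0 : Fin (n+2)).succAbove) Fin.succ).det
      = (-1 : ℂ)^((n:ℕ)+1) := by
    have ht : (S2.submatrix ((0 : Fin (n+2)).succAbove) Fin.succ).BlockTriangular id := by
      intro i j hij
      rw [Matrix.submatrix_apply, Fin.zero_succAbove, hS2, Matrix.submatrix_apply, sAlast]
      have hij' : (j : ℕ) < (i : ℕ) := hij
      have hi := i.is_lt; have hj := j.is_lt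
      simp only [per, Matrix.of_apply, Fin.ext_iff, Fin.val_succ, Fin.coe_castSucc]
      split_ifs <;> first | rfl | omega | simp_all
    rw [Matrix.det_of_upperTriangular ht]
    have hd : ∀ i : Fin (n+1), (S2.submatrix ((0 : Fin (n+2)).succAbove) Fin.succ) i i
        = -1 := by
      intro i
      have hi := i.is_lt
      rw [Matrix.submatrix_apply, Fin.zero_succAbove, hS2, Matrix.submatrix_apply, sAlast]
      simp only [per, Matrix.of_apply, Fin.ext_iff, Fin.val_succ, Fin.coe_castSucc]
      split_ifs <;> first | rfl | omega | simp_all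
    simp only [hd]
    simp
  -- second inner minor: interior tridiagonal block
  have hinner1 : S2.submatrix ((Fin.last (n+1)).succAbove) Fin.succ
      = Trid (n+1) (fun i => w i.castSucc.succ) := by
    ext i j
    have hi := i.is_lt; have hj := j.is_lt
    rw [Matrix.submatrix_apply, sAlast', hS2, Matrix.submatrix_apply, sAlast]
    simp only [per, Trid, Matrix.of_apply, Fin.ext_iff, Fin.val_succ, Fin.coe_castSucc]
    split_ifs <;> first | rfl | omega | simp_all
  rw [hinner0, hinner1, Trid_det, hcol 0]
  simp only [Fin.val_zero, pow_zero, eq_self_iff_true, if_true]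
  ring

-- the main determinant identity for the periodic matrix
lemma per_det (n : ℕ) (w : Fin (n+3) → ℂ) (α β : ℂ) :
    (per n w α β).det
      = Dd (n+3) w + (α + β) - α * β * Dd (n+1) (fun i => w i.castSucc.succ) := by
  rw [Matrix.det_succ_row_zero, Fin.sum_univ_succ, Fin.sum_univ_succ]
  have hrow : ∀ j : Fin (n+3), per n w α β 0 j
      = if (j : ℕ) = 0 then w 0 else if (j : ℕ) = 1 then -1
        else if (j : ℕ) = n+2 then α else 0 := by
    intro j
    have hj := j.is_lt
    simp only [per, Matrix.of_apply, Fin.ext_iff, Fin.val_zero]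
    split_ifs <;> first | rfl | omega | simp_all
  have hsub0 : (per n w α β).submatrix Fin.succ ((0 : Fin (n+3)).succAbove)
      = Trid (n+2) (fun i => w i.succ) := by
    ext i j
    have hi := i.is_lt; have hj := j.is_lt
    rw [Matrix.submatrix_apply, Fin.zero_succAbove]
    simp only [per, Trid, Matrix.of_apply, Fin.ext_iff, Fin.val_succ]
    split_ifs <;> first | rfl | omega | simp_all
  have hsum : ∑ j : Fin (n+1), (-1 : ℂ)^((j.succ.succ : Fin (n+3)) : ℕ) *
        per n w α β 0 j.succ.succ *
        ((per n w α β).submatrix Fin.succ j.succ.succ.succAbove).det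
      = (-1)^((n:ℕ)+2) * α *
        ((per n w α β).submatrix Fin.succ
          ((Fin.last (n+2) : Fin (n+3)).succAbove)).det := by
    rw [Fintype.sum_eq_single (Fin.last n)]
    · have hl : ((Fin.last n).succ.succ : Fin (n+3)) = Fin.last (n+2) := by
        ext; simp
      rw [hl, hrow (Fin.last (n+2)), Fin.val_last]
      rw [if_neg (by omega), if_neg (by omega), if_pos rfl]
    · intro b hb
      rw [hrow]
      have hb' : (b : ℕ) ≠ n := by simpa [Fin.ext_iff] using hb
      have hbl := b.is_lt
      simp only [Fin.val_succ]
      rw [if_neg (by omega), if_neg (by omega), if_neg (by omega), mul_zero, zero_mul]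
  rw [hsum]
  have e00 : per n w α β 0 0 = w 0 := by
    rw [hrow 0]; simp
  have e01 : per n w α β 0 1 = -1 := by
    rw [hrow 1]
    rw [if_neg (by simp [Fin.val_one]), if_pos (by simp [Fin.val_one])]
  rw [show (Fin.succ (0 : Fin (n+2)) : Fin (n+3)) = 1 from by ext; simp]
  rw [e00, e01, hsub0, Trid_det, S1_det, S2_det]
  simp only [Fin.val_zero, Fin.val_one, pow_zero, pow_one]
  have h2 := neg_one_sq_pow ((n:ℕ)+2)
  have h3 : ((-1 : ℂ))^((n:ℕ)+2) * (-1)^((n:ℕ)+1) = -1 := by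
    rw [show (n:ℕ)+2 = ((n:ℕ)+1)+1 from rfl, pow_succ]
    calc (-1 : ℂ)^((n:ℕ)+1) * (-1) * (-1)^((n:ℕ)+1)
        = ((-1 : ℂ)^((n:ℕ)+1) * (-1)^((n:ℕ)+1)) * (-1) := by ring
      _ = -1 := by rw [neg_one_sq_pow]; ring
  have hDd : Dd (n+3) w = w 0 * Dd (n+2) (fun i => w i.succ)
      - Dd (n+1) (fun i => w i.succ.succ) := rfl
  rw [hDd]
  have expand : (-1 : ℂ)^((n:ℕ)+2) * α *
      (-(-1 : ℂ)^((n:ℕ)+1)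
        + (-1 : ℂ)^((n:ℕ)+1) * β * Dd (n+1) (fun i => w i.castSucc.succ))
      = α + (-(α * β)) * Dd (n+1) (fun i => w i.castSucc.succ) := by
    have e1 : (-1 : ℂ)^((n:ℕ)+2) * (-(-1 : ℂ)^((n:ℕ)+1)) = 1 := by
      rw [mul_neg, h3]; ring
    calc (-1 : ℂ)^((n:ℕ)+2) * α *
        (-(-1 : ℂ)^((n:ℕ)+1)
          + (-1 : ℂ)^((n:ℕ)+1) * β * Dd (n+1) (fun i => w i.castSucc.succ))
        = ((-1 : ℂ)^((n:ℕ)+2) * (-(-1 : ℂ)^((n:ℕ)+1))) * α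
          + ((-1 : ℂ)^((n:ℕ)+2) * (-1 : ℂ)^((n:ℕ)+1)) * (α * β)
            * Dd (n+1) (fun i => w i.castSucc.succ) := by ring
      _ = _ := by rw [e1, h3]; ring
  rw [expand]
  ring


end FloqAux

/-- `det(H(k) - z·Id) = tr T(L,z) - 2 cos(kL)`. -/
theorem det_floquet_eq_trace_transfer_sub (L : ℕ) (hL : 3 ≤ L) (v : Fin L → ℝ)
    (k : ℝ) (z : ℂ) :
    (floquetH L v k - z • 1).det =
      (transferTC L v z).trace - 2 * Complex.cos (k * L) := by
  obtain ⟨n, rfl⟩ : ∃ n, L = n + 3 := ⟨L - 3, by omega⟩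
  set w : Fin (n+3) → ℂ := fun i => (v i : ℂ) - z with hw
  set α : ℂ := -Complex.exp (-(Complex.I * k * ((n+3 : ℕ) : ℂ))) with hα
  set β : ℂ := -Complex.exp (Complex.I * k * ((n+3 : ℕ) : ℂ)) with hβ
  have hM : floquetH (n+3) v k - z • 1 = FloqAux.per n w α β := by
    ext i j
    simp only [Matrix.sub_apply, Matrix.smul_apply, Matrix.one_apply, smul_eq_mul,
      floquetH, FloqAux.per, Matrix.of_apply, show n+3-1 = n+2 from rfl]
    split_ifs <;> first | rfl | omega | simp_all | ring
  rw [hM, FloqAux.per_det]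
  have hT : transferTC (n+3) v z = FloqAux.Pm (n+3) w := rfl
  rw [hT, FloqAux.Pm_spec]
  rw [Matrix.trace_fin_two_of]
  have hTv : FloqAux.Tv (n+3) w = -FloqAux.Ed (n+2) (fun i => w i.succ) := rfl
  have hEd := FloqAux.Ed_eq (n+1) (fun i => w i.succ)
  rw [hTv, hEd]
  have hmid : (fun i : Fin (n+1) => (fun j : Fin (n+2) => w j.succ) i.castSucc)
      = (fun i : Fin (n+1) => w i.castSucc.succ) := rfl
  rw [hmid]
  have hab : α * β = 1 := by
    rw [hα, hβ, neg_mul_neg, ← Complex.exp_add, neg_add_cancel, Complex.exp_zero]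
  have hsum : α + β = -(2 * Complex.cos ((k : ℂ) * ((n+3 : ℕ) : ℂ))) := by
    rw [hα, hβ, Complex.two_cos]
    rw [show (k : ℂ) * ((n+3 : ℕ) : ℂ) * Complex.I = Complex.I * k * ((n+3 : ℕ) : ℂ) by ring,
      show -((k : ℂ) * ((n+3 : ℕ) : ℂ)) * Complex.I = -(Complex.I * k * ((n+3 : ℕ) : ℂ)) by ring]
    ring
  rw [hab, hsum]
  push_cast
  ring
end

section
/- For every positive integer L, every potential v : {1,…,L} → ℝ, and every E ∈ ℝ with |tr T(L,E)| < 2, one has | d/dE tr T(L,E) | ≥ L · √( 1 − (tr T(L,E)/2)² ). (Equivalently, setting θ(L,E) = arccos( tr T(L,E)/2 ) on the interior of the Floquet spectrum, |∂_E θ(L,E)| ≥ L/2.) -/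
/-- The one-step transfer matrix `A(a,E) = [[a-E,-1],[1,0]]`. -/
noncomputable def transferA (a E : ℝ) : Matrix (Fin 2) (Fin 2) ℝ := !![a - E, -1; 1, 0]

/-- The transfer matrix `T(L,E) = A(v(L),E) ⋯ A(v(1),E)` (indices `1,…,L` realized as `Fin L`). -/
noncomputable def transferT (L : ℕ) (v : Fin L → ℝ) (E : ℝ) : Matrix (Fin 2) (Fin 2) ℝ :=
  ((List.ofFn fun i : Fin L => transferA (v i) E).reverse).prod

namespace TransferAux

attribute [local instance] Matrix.linftyOpNormedRing Matrix.linftyOpNormedAlgebra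

noncomputable abbrev Ad : Matrix (Fin 2) (Fin 2) ℝ := !![(-1:ℝ),0;0,0]

lemma hasDerivAt_transferA (a E : ℝ) : HasDerivAt (fun x => transferA a x) Ad E := by
  have h : (fun x => transferA a x) = fun x : ℝ => !![a,-1;1,0] + x • Ad := by
    funext x; ext i j
    fin_cases i <;> fin_cases j <;> (simp [transferA]; try ring)
  rw [h]
  have := ((hasDerivAt_id E).smul_const Ad).const_add !![a,-1;1,0]
  rw [one_smul] at this
  exact this

lemma ofFn_reverse {n : ℕ} {α : Type*} (f : Fin n → α) :
    (List.ofFn f).reverse = List.ofFn (fun i => f i.rev) := by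
  apply List.ext_getElem
  · simp
  · intro k h1 h2
    simp only [List.getElem_reverse, List.getElem_ofFn, List.length_ofFn] at *
    congr 1
    ext
    simp [Fin.rev]
    omega

lemma hasDerivAt_prod (L : ℕ) (w : Fin L → ℝ) (E : ℝ) :
    HasDerivAt (fun x => (List.ofFn fun i => transferA (w i) x).prod)
      (∑ i : Fin (List.finRange L).length,
        ((List.ofFn fun j => transferA (w j) E).take i).prod * Ad *
        ((List.ofFn fun j => transferA (w j) E).drop (i+1)).prod) E := by
  have h := HasFDerivAt.list_prod' (𝕜 := ℝ) (ι := Fin L) (l := List.finRange L)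
      (f := fun i x => transferA (w i) x)
      (f' := fun i => ContinuousLinearMap.smulRight (1 : ℝ →L[ℝ] ℝ) Ad)
      (x := E) (fun i _ => (hasDerivAt_transferA (w i) E).hasFDerivAt)
  have h2 := h.hasDerivAt
  simp only [List.ofFn_eq_map] at *
  have h3 : HasDerivAt (fun x => (List.map (fun i => transferA (w i) x) (List.finRange L)).prod) _ E := h2
  convert h3 using 1
  simp [ContinuousLinearMap.sum_apply, List.map_take, List.map_drop, smul_smul,
    Matrix.mul_smul, Matrix.smul_mul, mul_assoc, Nat.succ_eq_add_one]

lemma hasDerivAt_trace_prod (L : ℕ) (w : Fin L → ℝ) (E : ℝ) :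
    HasDerivAt (fun x => ((List.ofFn fun i => transferA (w i) x).prod).trace)
      (∑ i ∈ Finset.range L,
        (((List.ofFn fun j => transferA (w j) E).take i).prod * Ad *
         ((List.ofFn fun j => transferA (w j) E).drop (i+1)).prod).trace) E := by
  have h := hasDerivAt_prod L w E
  have h2 := (LinearMap.toContinuousLinearMap
    (Matrix.traceLinearMap (Fin 2) ℝ ℝ)).hasFDerivAt.comp_hasDerivAt E h
  simp only [Function.comp_def, map_sum, LinearMap.coe_toContinuousLinearMap',
    Matrix.traceLinearMap_apply] at h2
  change HasDerivAt _ ((Matrix.traceLinearMap (Fin 2) ℝ ℝ) _) E at h2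
  simp only [map_sum, Matrix.traceLinearMap_apply] at h2
  have h3 := Fin.sum_univ_eq_sum_range (fun i =>
    (((List.ofFn fun j => transferA (w j) E).take i).prod * Ad *
     ((List.ofFn fun j => transferA (w j) E).drop (i+1)).prod).trace)
    (List.finRange L).length
  rw [h3, List.length_finRange] at h2
  exact h2

lemma entry_mul_left (a E : ℝ) (Z : Matrix (Fin 2) (Fin 2) ℝ) :
    (transferA a E * Z) 1 0 = Z 0 0 := by
  simp [transferA, Matrix.mul_apply, Fin.sum_univ_two]

lemma entry_mul_right (a E : ℝ) (Z : Matrix (Fin 2) (Fin 2) ℝ) :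
    (Z * transferA a E) 0 1 = -(Z 0 0) := by
  simp [transferA, Matrix.mul_apply, Fin.sum_univ_two]

lemma trace_mul_Ad (X : Matrix (Fin 2) (Fin 2) ℝ) :
    (X * Ad).trace = -(X 0 0) := by
  simp [Matrix.trace_fin_two, Matrix.mul_apply, Fin.sum_univ_two]

lemma det_transferA (a E : ℝ) : (transferA a E).det = 1 := by
  simp [transferA, Matrix.det_fin_two_of]

lemma det_list_prod_one (lst : List (Matrix (Fin 2) (Fin 2) ℝ))
    (h : ∀ X ∈ lst, X.det = 1) : lst.prod.det = 1 := by
  induction lst with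
  | nil => simp
  | cons a tl ih =>
    rw [List.prod_cons, Matrix.det_mul, h a List.mem_cons_self, one_mul]
    exact ih fun X hX => h X (List.mem_cons_of_mem _ hX)

lemma key_quad (S : Matrix (Fin 2) (Fin 2) ℝ) (hdet : S.det = 1) :
    1 - (S.trace / 2) ^ 2 ≤ (-(S 0 1)) * (S 1 0) := by
  rw [Matrix.det_fin_two] at hdet
  rw [Matrix.trace_fin_two]
  nlinarith [sq_nonneg (S 0 0 - S 1 1)]

lemma sum_shift_mod (L : ℕ) (hL : 0 < L) (f : ℕ → ℝ) :
    ∑ i ∈ Finset.range L, f ((i+1) % L) = ∑ i ∈ Finset.range L, f i := by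
  obtain ⟨n, rfl⟩ : ∃ n, L = n + 1 := ⟨L - 1, by omega⟩
  rw [Finset.sum_range_succ, Finset.sum_range_succ' f n]
  congr 1
  · exact Finset.sum_congr rfl fun i hi => by
      rw [Nat.mod_eq_of_lt (Nat.succ_lt_succ (Finset.mem_range.mp hi))]
  · rw [Nat.mod_self]

end TransferAux

open TransferAux in
/-- On the interior of the Floquet spectrum, `|d/dE tr T(L,E)| ≥ L √(1 - (tr T(L,E)/2)²)`. -/
theorem abs_deriv_trace_transfer_ge (L : ℕ) (hL : 0 < L) (v : Fin L → ℝ)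
    (E : ℝ) (hE : |(transferT L v E).trace| < 2) :
    |deriv (fun x : ℝ => (transferT L v x).trace) E| ≥
      (L : ℝ) * Real.sqrt (1 - ((transferT L v E).trace / 2) ^ 2) := by
  classical
  set w : Fin L → ℝ := fun i => v i.rev with hw
  have hrev : ∀ x, transferT L v x = (List.ofFn fun i => transferA (w i) x).prod := by
    intro x; rw [transferT, TransferAux.ofFn_reverse]
  set l : List (Matrix (Fin 2) (Fin 2) ℝ) := List.ofFn (fun i => transferA (w i) E) with hl
  have hlen : l.length = L := by simp [hl]
  set w' : ℕ → ℝ := fun i => if h : i < L then w ⟨i, h⟩ else 0 with hw'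
  set m : ℕ → Matrix (Fin 2) (Fin 2) ℝ := fun i => transferA (w' i) E with hm
  have hget : ∀ (i : ℕ) (h : i < L), l[i]'(by omega) = m i := by
    intro i h
    simp [hl, hm, hw', h]
  set P : ℕ → Matrix (Fin 2) (Fin 2) ℝ := fun i => (l.take i).prod with hP
  set Q : ℕ → Matrix (Fin 2) (Fin 2) ℝ := fun i => (l.drop i).prod with hQ
  set S : ℕ → Matrix (Fin 2) (Fin 2) ℝ := fun i => m i * Q (i+1) * P i with hS
  set t : ℕ → ℝ := fun i => S i 1 0 with ht
  set Δ : ℝ := (transferT L v E).trace with hΔ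
  have hTm : l.prod = transferT L v E := (hrev E).symm
  -- basic product recursions
  have hPsucc : ∀ i < L, P (i+1) = P i * m i := by
    intro i h
    rw [hP]
    simp only
    rw [List.prod_take_succ l i (by omega), hget i h]
  have hQsucc : ∀ i < L, Q i = m i * Q (i+1) := by
    intro i h
    rw [hQ]
    simp only
    rw [List.drop_eq_getElem_cons (by omega : i < l.length), List.prod_cons, hget i h]
  have hQL : Q L = 1 := by
    rw [hQ]; simp only
    rw [List.drop_eq_nil_of_le (by omega)]; simp
  have hPL : P L = l.prod := by
    rw [hP]; simp only
    rw [List.take_of_length_le (by omega)]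
  have hP0 : P 0 = 1 := by simp [hP]
  -- determinants
  have hdetl : ∀ X ∈ l, X.det = 1 := by
    intro X hX
    rw [hl] at hX
    obtain ⟨j, rfl⟩ := List.mem_ofFn.mp hX
    exact det_transferA _ _
  have hdetP : ∀ i, (P i).det = 1 := fun i =>
    det_list_prod_one _ fun X hX => hdetl X (List.take_subset i l hX)
  have hdetQ : ∀ i, (Q i).det = 1 := fun i =>
    det_list_prod_one _ fun X hX => hdetl X (List.drop_subset i l hX)
  have hdetS : ∀ i, (S i).det = 1 := by
    intro i
    rw [hS]
    simp only
    rw [Matrix.det_mul, Matrix.det_mul, hm]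
    simp only [det_transferA, hdetP, hdetQ, one_mul, mul_one]
  -- traces
  have htrS : ∀ i < L, (S i).trace = Δ := by
    intro i h
    rw [hS]
    simp only
    rw [Matrix.trace_mul_comm (m i * Q (i+1)) (P i)]
    rw [← hQsucc i h, hΔ, ← hTm, hP, hQ]
    simp only
    rw [List.prod_take_mul_prod_drop]
  -- consecutive relation
  have hkey : ∀ i, i + 1 < L → t i = -(S (i+1) 0 1) := by
    intro i hi
    have hZ1 : S i = transferA (w' i) E * (m (i+1) * Q (i+1+1) * P i) := by
      simp only [hS, hm]
      rw [hQsucc (i+1) hi, mul_assoc]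
    have hZ2 : S (i+1) = (m (i+1) * Q (i+1+1) * P i) * transferA (w' i) E := by
      simp only [hS, hm]
      rw [hPsucc i (by omega), ← mul_assoc]
    simp only [ht, hZ1, hZ2]
    rw [entry_mul_left, entry_mul_right, neg_neg]
  -- wrap-around relation
  have hwrap : t (L-1) = -(S 0 0 1) := by
    have e1 : L - 1 + 1 = L := by omega
    have hZ1 : S (L-1) = transferA (w' (L-1)) E * (Q L * P (L-1)) := by
      simp only [hS, hm]
      rw [e1, mul_assoc]
    have hZ2 : S 0 = (Q L * P (L-1)) * transferA (w' (L-1)) E := by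
      have h1 : S 0 = Q 0 := by
        simp only [hS, hP0, mul_one]
        rw [← hQsucc 0 hL]
      have hp := hPsucc (L-1) (by omega)
      rw [e1] at hp
      simp only [hm] at hp
      rw [h1, hQL, one_mul, ← hp, hPL]
      simp [hQ]
    simp only [ht, hZ1, hZ2]
    rw [entry_mul_left, entry_mul_right, neg_neg]
  -- the quantity s2
  set s2 : ℝ := 1 - (Δ/2)^2 with hs2def
  have hs2 : 0 < s2 := by
    have := abs_lt.mp hE
    rw [hs2def]
    nlinarith [this.1, this.2]
  -- pair products are bounded below
  have hpair : ∀ i < L, s2 ≤ t i * t ((i+1) % L) := by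
    intro i hi
    rcases lt_or_ge (i+1) L with h'|h'
    · rw [Nat.mod_eq_of_lt h', hkey i h', hs2def]
      have hq := key_quad (S (i+1)) (hdetS (i+1))
      rw [htrS (i+1) h'] at hq
      exact hq
    · have h1 : i + 1 = L := by omega
      rw [h1, Nat.mod_self]
      have h2 : i = L - 1 := by omega
      rw [h2, hwrap, hs2def]
      have hq := key_quad (S 0) (hdetS 0)
      rw [htrS 0 hL] at hq
      exact hq
  have hppos : ∀ i < L, 0 < t i * t ((i+1) % L) := fun i hi =>
    lt_of_lt_of_le hs2 (hpair i hi)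
  have ht0 : t 0 ≠ 0 := by
    intro h0
    have h1 := hppos 0 hL
    rw [h0, zero_mul] at h1
    exact lt_irrefl _ h1
  -- all terms have the same sign
  have hsame : (∀ i < L, 0 < t i) ∨ (∀ i < L, t i < 0) := by
    rcases ht0.lt_or_gt with hneg|hpos
    · right
      intro i
      induction i with
      | zero => exact fun _ => hneg
      | succ n ihn =>
        intro hn
        have hn' : n < L := by omega
        have h1 := ihn hn'
        have h2 := hppos n hn'
        rw [Nat.mod_eq_of_lt hn] at h2
        nlinarith
    · left
      intro i
      induction i with
      | zero => exact fun _ => hpos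
      | succ n ihn =>
        intro hn
        have hn' : n < L := by omega
        have h1 := ihn hn'
        have h2 := hppos n hn'
        rw [Nat.mod_eq_of_lt hn] at h2
        nlinarith
  -- reindexing the cyclically shifted sum
  have hreindex := sum_shift_mod L hL (fun i => |t i|)
  -- pairwise lower bound on sums of absolute values
  have hpairabs : ∀ i < L, 2 * Real.sqrt s2 ≤ |t i| + |t ((i+1) % L)| := by
    intro i hi
    have h2 := hpair i hi
    have h3 : s2 ≤ |t i| * |t ((i+1) % L)| := by
      rw [← abs_mul]
      exact h2.trans (le_abs_self _)
    have h4 := Real.sq_sqrt hs2.le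
    have h5 := Real.sqrt_nonneg s2
    nlinarith [abs_nonneg (t i), abs_nonneg (t ((i+1) % L)),
      sq_nonneg (|t i| - |t ((i+1) % L)|),
      sq_nonneg (|t i| + |t ((i+1) % L)| - 2*Real.sqrt s2)]
  -- summed lower bound
  have hsumabs : (L : ℝ) * Real.sqrt s2 ≤ ∑ i ∈ Finset.range L, |t i| := by
    have h1 : ∑ _i ∈ Finset.range L, (2 * Real.sqrt s2) ≤
        ∑ i ∈ Finset.range L, (|t i| + |t ((i+1) % L)|) :=
      Finset.sum_le_sum (fun i hi => hpairabs i (Finset.mem_range.mp hi))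
    rw [Finset.sum_add_distrib, hreindex, Finset.sum_const, Finset.card_range,
      nsmul_eq_mul] at h1
    linarith
  -- absolute value of the sum
  have habs_sum : |∑ i ∈ Finset.range L, t i| = ∑ i ∈ Finset.range L, |t i| := by
    rcases hsame with hp|hn
    · rw [abs_of_nonneg (Finset.sum_nonneg fun i hi => (hp i (Finset.mem_range.mp hi)).le)]
      exact Finset.sum_congr rfl fun i hi => (abs_of_pos (hp i (Finset.mem_range.mp hi))).symm
    · rw [abs_of_nonpos (Finset.sum_nonpos fun i hi => (hn i (Finset.mem_range.mp hi)).le),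
        ← Finset.sum_neg_distrib]
      exact Finset.sum_congr rfl fun i hi => (abs_of_neg (hn i (Finset.mem_range.mp hi))).symm
  -- value of the derivative
  have hD : deriv (fun x : ℝ => (transferT L v x).trace) E = ∑ i ∈ Finset.range L, -(t i) := by
    have hfun : (fun x : ℝ => (transferT L v x).trace) =
        fun x => ((List.ofFn fun i => transferA (w i) x).prod).trace := by
      funext x; rw [hrev x]
    rw [hfun, (hasDerivAt_trace_prod L w E).deriv]
    apply Finset.sum_congr rfl
    intro i hi
    have hiL := Finset.mem_range.mp hi
    simp only [ht, hS, hm, hP, hQ, hl]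
    rw [Matrix.trace_mul_cycle, trace_mul_Ad, mul_assoc, entry_mul_left]
  -- conclusion
  rw [ge_iff_le, hD, Finset.sum_neg_distrib, abs_neg, habs_sum]
  exact hsumabs
end
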